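/- Let B be a fixed subset of ordered pairs, let E be a fixed set of (unordered) edges on n vertices, and let π be a uniformly random permutation of the n vertices with E₂ = π(E) = {(i,j) : (π(i), π(j)) ∈ E}. Suppose B is a product set (block) B = R × C with R and C disjoint subsets of vertices. Then for any integer k ≥ 0 with Pr{|B ∩ E₂| = k} > 0 and any (i,j) ∈ B, Pr{(i,j) ∈ E₂ | |B ∩ E₂| = k} = k/|B|. -/

import Mathlib

open Finset

private lemma perm_inv_mem' {n : ℕ} (τ : Equiv.Perm (Fin n)) (R : Finset (Fin n))
    (h : ∀ x ∈ R, τ x ∈ R) : ∀ x ∈ R, τ⁻¹ x ∈ R := by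
  have himg : R.image τ = R := by
    apply Finset.eq_of_subset_of_card_le
    · intro x hx; obtain ⟨y, hy, rfl⟩ := Finset.mem_image.mp hx; exact h y hy
    · rw [Finset.card_image_of_injective _ τ.injective]
  intro x hx
  rw [← himg] at hx
  obtain ⟨y, hy, hxy⟩ := Finset.mem_image.mp hx
  have hy' : τ⁻¹ x = y := by rw [← hxy]; simp
  rwa [hy']

private lemma count_perm' {n : ℕ} (E : Finset (Fin n × Fin n)) (R C : Finset (Fin n))
    (τ π : Equiv.Perm (Fin n)) (hR : ∀ x ∈ R, τ x ∈ R) (hC : ∀ x ∈ C, τ x ∈ C) :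
    ((R ×ˢ C).filter (fun p => (π (τ p.1), π (τ p.2)) ∈ E)).card
      = ((R ×ˢ C).filter (fun p => (π p.1, π p.2) ∈ E)).card := by
  apply Finset.card_bij (fun p _ => (τ p.1, τ p.2))
  · intro p hp
    simp only [Finset.mem_filter, Finset.mem_product] at hp ⊢
    exact ⟨⟨hR _ hp.1.1, hC _ hp.1.2⟩, hp.2⟩
  · intro p hp q hq hpq
    have h1 := congrArg Prod.fst hpq
    have h2 := congrArg Prod.snd hpq
    simp only at h1 h2
    exact Prod.ext (τ.injective h1) (τ.injective h2)
  · intro q hq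
    simp only [Finset.mem_filter, Finset.mem_product] at hq
    refine ⟨(τ⁻¹ q.1, τ⁻¹ q.2), ?_, ?_⟩
    · simp only [Finset.mem_filter, Finset.mem_product]
      exact ⟨⟨perm_inv_mem' τ R hR _ hq.1.1, perm_inv_mem' τ C hC _ hq.1.2⟩,
        by simpa using hq.2⟩
    · simp

theorem stmt12 (n : ℕ) (E : Finset (Fin n × Fin n)) (R C : Finset (Fin n))
    (hRC : Disjoint R C) (k : ℕ) (i j : Fin n) (hij : (i, j) ∈ R ×ˢ C)
    (hpos : (Finset.univ.filter (fun π : Equiv.Perm (Fin n) =>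
        ((R ×ˢ C).filter (fun p => (π p.1, π p.2) ∈ E)).card = k)).Nonempty) :
    ((Finset.univ.filter (fun π : Equiv.Perm (Fin n) =>
        ((R ×ˢ C).filter (fun p => (π p.1, π p.2) ∈ E)).card = k ∧ (π i, π j) ∈ E)).card : ℝ)
      / ((Finset.univ.filter (fun π : Equiv.Perm (Fin n) =>
        ((R ×ˢ C).filter (fun p => (π p.1, π p.2) ∈ E)).card = k)).card : ℝ)
      = (k : ℝ) / ((R ×ˢ C).card : ℝ) := by
  classical
  obtain ⟨hiR, hjC⟩ := Finset.mem_product.mp hij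
  set cnt : Equiv.Perm (Fin n) → ℕ :=
    fun π => ((R ×ˢ C).filter (fun p => (π p.1, π p.2) ∈ E)).card with hcnt
  set D : Finset (Equiv.Perm (Fin n)) :=
    Finset.univ.filter (fun π : Equiv.Perm (Fin n) => cnt π = k) with hD
  set N : Fin n × Fin n → ℕ :=
    fun p => (Finset.univ.filter (fun π : Equiv.Perm (Fin n) =>
      cnt π = k ∧ (π p.1, π p.2) ∈ E)).card with hN
  -- N is constant on B
  have key : ∀ p ∈ R ×ˢ C, N p = N (i, j) := by
    intro p hp
    obtain ⟨hpR, hpC⟩ := Finset.mem_product.mp hp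
    set τ : Equiv.Perm (Fin n) := Equiv.swap i p.1 * Equiv.swap j p.2 with hτ
    have hijne : ∀ x ∈ R, ∀ y ∈ C, x ≠ y := fun x hx y hy =>
      fun hxy => (Finset.disjoint_left.mp hRC hx (hxy ▸ hy))
    have hτR : ∀ x ∈ R, τ x ∈ R := by
      intro x hx
      have h1 : Equiv.swap j p.2 x = x :=
        Equiv.swap_apply_of_ne_of_ne (hijne x hx j hjC) (hijne x hx p.2 hpC)
      simp only [hτ, Equiv.Perm.mul_apply, h1]
      rcases eq_or_ne x i with rfl | hxi
      · rw [Equiv.swap_apply_left]; exact hpR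
      · rcases eq_or_ne x p.1 with rfl | hxp
        · rw [Equiv.swap_apply_right]; exact hiR
        · rw [Equiv.swap_apply_of_ne_of_ne hxi hxp]; exact hx
    have hτC : ∀ x ∈ C, τ x ∈ C := by
      intro x hx
      have h2 : ∀ y, Equiv.swap j p.2 y ∈ C → Equiv.swap i p.1 (Equiv.swap j p.2 y) = Equiv.swap j p.2 y := by
        intro y hy
        exact Equiv.swap_apply_of_ne_of_ne
          (fun h => hijne i hiR _ hy h.symm) (fun h => hijne p.1 hpR _ hy h.symm)
      have h1 : Equiv.swap j p.2 x ∈ C := by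
        rcases eq_or_ne x j with rfl | hxj
        · rw [Equiv.swap_apply_left]; exact hpC
        · rcases eq_or_ne x p.2 with rfl | hxp
          · rw [Equiv.swap_apply_right]; exact hjC
          · rw [Equiv.swap_apply_of_ne_of_ne hxj hxp]; exact hx
      simp only [hτ, Equiv.Perm.mul_apply]
      rw [h2 x h1]; exact h1
    have hτi : τ i = p.1 := by
      simp only [hτ, Equiv.Perm.mul_apply]
      rw [Equiv.swap_apply_of_ne_of_ne (hijne i hiR j hjC) (hijne i hiR p.2 hpC),
        Equiv.swap_apply_left]
    have hτj : τ j = p.2 := by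
      simp only [hτ, Equiv.Perm.mul_apply]
      rw [Equiv.swap_apply_left]
      exact Equiv.swap_apply_of_ne_of_ne
        (fun h => hijne i hiR p.2 hpC h.symm) (fun h => hijne p.1 hpR p.2 hpC h.symm)
    -- bijection π ↦ π * τ from N p set to N (i,j) set
    apply Finset.card_bij (fun π _ => π * τ)
    · intro π hπ
      simp only [hN, Finset.mem_filter, Finset.mem_univ, true_and] at hπ ⊢
      constructor
      · have := count_perm' E R C τ π hτR hτC
        simp only [hcnt, Equiv.Perm.mul_apply]
        exact this.trans hπ.1
      · simpa [Equiv.Perm.mul_apply, hτi, hτj] using hπ.2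
    · intro a ha b hb hab
      exact mul_right_cancel hab
    · intro σ hσ
      simp only [hN, Finset.mem_filter, Finset.mem_univ, true_and] at hσ
      refine ⟨σ * τ⁻¹, ?_, by group⟩
      simp only [Finset.mem_filter, Finset.mem_univ, true_and]
      have hτR' := perm_inv_mem' τ R hτR
      have hτC' := perm_inv_mem' τ C hτC
      constructor
      · have := count_perm' E R C τ⁻¹ σ hτR' hτC'
        simp only [hcnt, Equiv.Perm.mul_apply]
        exact this.trans hσ.1
      · have h1 : τ⁻¹ p.1 = i := by rw [← hτi]; simp
        have h2 : τ⁻¹ p.2 = j := by rw [← hτj]; simp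
        simpa [Equiv.Perm.mul_apply, h1, h2] using hσ.2
  -- sum over B
  have hNfilt : ∀ p : Fin n × Fin n, N p = (D.filter (fun π => (π p.1, π p.2) ∈ E)).card := by
    intro p
    simp only [hN, hD, Finset.filter_filter]
  have hsum : ∑ p ∈ R ×ˢ C, N p = k * D.card := by
    calc ∑ p ∈ R ×ˢ C, N p
        = ∑ p ∈ R ×ˢ C, ∑ π ∈ D, (if (π p.1, π p.2) ∈ E then 1 else 0) := by
          refine Finset.sum_congr rfl fun p _ => ?_
          rw [hNfilt p, Finset.card_filter]
      _ = ∑ π ∈ D, ∑ p ∈ R ×ˢ C, (if (π p.1, π p.2) ∈ E then 1 else 0) :=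
          Finset.sum_comm
      _ = ∑ π ∈ D, cnt π := by
          refine Finset.sum_congr rfl fun π _ => ?_
          exact (Finset.card_filter _ _).symm
      _ = ∑ π ∈ D, k := by
          refine Finset.sum_congr rfl fun π hπ => ?_
          exact (Finset.mem_filter.mp hπ).2
      _ = D.card * k := by rw [Finset.sum_const, smul_eq_mul]
      _ = k * D.card := Nat.mul_comm _ _
  have hconst : ∑ p ∈ R ×ˢ C, N p = (R ×ˢ C).card * N (i, j) := by
    rw [Finset.sum_congr rfl key, Finset.sum_const, smul_eq_mul]
  have hkey : N (i, j) * (R ×ˢ C).card = k * D.card := by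
    rw [Nat.mul_comm, ← hconst, hsum]
  have hDpos : (0 : ℝ) < D.card := by
    exact_mod_cast Finset.card_pos.mpr hpos
  have hBpos : (0 : ℝ) < (R ×ˢ C).card := by
    exact_mod_cast Finset.card_pos.mpr ⟨(i, j), hij⟩
  rw [div_eq_div_iff hDpos.ne' hBpos.ne']
  have : ((N (i, j) : ℝ)) * (R ×ˢ C).card = k * D.card := by exact_mod_cast hkey
  simpa [hN, hD, hcnt] using this
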